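/- Under the hypotheses of the previous lemma (f ⊆ f', relint(f) ∩ relint(e) ≠ ∅, dim F' = dim F + 1, dim(E ∩ F') = dim(E ∩ F) + 1), the relative interiors of e and f' intersect: relint(e) ∩ relint(f') ≠ ∅. -/

import Mathlib

open Set Module

variable {V : Type*} [NormedAddCommGroup V] [NormedSpace ℝ V]

/-- From a point of the intrinsic interior, a metric ball within the affine span stays in the
intrinsic interior. -/
lemma relint_ball {s : Set V} {p : V} (hp : p ∈ intrinsicInterior ℝ s) :
    p ∈ affineSpan ℝ s ∧ ∃ ε > 0, ∀ q, q ∈ affineSpan ℝ s → dist q p < ε →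
      q ∈ intrinsicInterior ℝ s := by
  obtain ⟨p₀, hp₀, rfl⟩ := mem_intrinsicInterior.1 hp
  refine ⟨p₀.2, ?_⟩
  have hnh : interior ((↑) ⁻¹' s : Set <| affineSpan ℝ s) ∈ nhds p₀ :=
    isOpen_interior.mem_nhds hp₀
  obtain ⟨ε, hε, hball⟩ := Metric.mem_nhds_iff.1 hnh
  refine ⟨ε, hε, fun q hq hdq => ?_⟩
  refine mem_intrinsicInterior.2 ⟨⟨q, hq⟩, hball ?_, rfl⟩
  simpa [Metric.mem_ball, Subtype.dist_eq] using hdq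

lemma mem_relint_of_ball {s : Set V} {p : V} (hp : p ∈ affineSpan ℝ s)
    (h : ∃ ε > 0, ∀ q, q ∈ affineSpan ℝ s → dist q p < ε → q ∈ s) :
    p ∈ intrinsicInterior ℝ s := by
  obtain ⟨ε, hε, hball⟩ := h
  refine mem_intrinsicInterior.2 ⟨⟨p, hp⟩, ?_, rfl⟩
  rw [mem_interior_iff_mem_nhds, Metric.mem_nhds_iff]
  refine ⟨ε, hε, fun q hq => ?_⟩
  exact hball q q.2 (by simpa [Metric.mem_ball, Subtype.dist_eq] using hq)

/-- Open segment from a point of a convex set to a point of its intrinsic interior stays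
in the intrinsic interior. -/
lemma combo_mem_relint {s : Set V} (hs : Convex ℝ s) {a w : V} (ha : a ∈ s)
    (hw : w ∈ intrinsicInterior ℝ s) {t : ℝ} (ht0 : 0 < t) (ht1 : t < 1) :
    (1 - t) • a + t • w ∈ intrinsicInterior ℝ s := by
  obtain ⟨hwspan, ε, hε, hball⟩ := relint_ball hw
  have haspan : a ∈ affineSpan ℝ s := subset_affineSpan ℝ s ha
  have hpspan : (1 - t) • a + t • w ∈ affineSpan ℝ s := by
    have h1 : (1 - t) • a + t • w = ((1 - t) • (a - w)) +ᵥ w := by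
      simp [vadd_eq_add]; module
    rw [h1]
    exact AffineSubspace.vadd_mem_of_mem_direction
      (Submodule.smul_mem _ _ (AffineSubspace.vsub_mem_direction haspan hwspan)) hwspan
  refine mem_relint_of_ball hpspan ⟨t * ε, by positivity, fun q hq hdq => ?_⟩
  set p := (1 - t) • a + t • w with hp
  set r := w + t⁻¹ • (q - p) with hr
  have hrspan : r ∈ affineSpan ℝ s := by
    have : r = (t⁻¹ • (q - p)) +ᵥ w := by simp [hr, vadd_eq_add]; abel
    rw [this]
    exact AffineSubspace.vadd_mem_of_mem_direction
      (Submodule.smul_mem _ _ (AffineSubspace.vsub_mem_direction hq hpspan)) hwspan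
  have hdr : dist r w < ε := by
    have : dist r w = t⁻¹ * dist q p := by
      rw [dist_eq_norm, dist_eq_norm, hr]
      rw [add_sub_cancel_left, norm_smul, Real.norm_eq_abs, abs_of_pos (by positivity)]
    rw [this]
    calc t⁻¹ * dist q p < t⁻¹ * (t * ε) := by
          apply mul_lt_mul_of_pos_left hdq (by positivity)
      _ = ε := by field_simp
  have hrs : r ∈ s := intrinsicInterior_subset (hball r hrspan hdr)
  have hqe : q = (1 - t) • a + t • r := by
    rw [hr, hp, smul_add, smul_smul, mul_inv_cancel₀ (ne_of_gt ht0)]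
    module
  rw [hqe]
  exact hs ha hrs (by linarith) (le_of_lt ht0) (by ring)

set_option maxHeartbeats 1000000 in
/-- Under the hypotheses of Statement 1 (`f ⊆ f'` convex, tangent spaces
`F ⊆ F'`, `E`, `relint f ∩ relint e ≠ ∅`, `dim F' = dim F + 1`,
`dim (E ⊓ F') = dim (E ⊓ F) + 1`), the relative interiors of `e` and `f'` intersect. -/
theorem relint_inter_nonempty {d : ℕ}
    (e f f' : Set (EuclideanSpace ℝ (Fin d)))
    (he : Convex ℝ e) (hf : Convex ℝ f) (hf' : Convex ℝ f') (hff' : f ⊆ f')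
    (x y y' : EuclideanSpace ℝ (Fin d)) (hx : x ∈ e) (hy : y ∈ f) (hy' : y' ∈ f')
    (E F F' : Submodule ℝ (EuclideanSpace ℝ (Fin d)))
    (hE : E = Submodule.span ℝ ((· - x) '' e))
    (hF : F = Submodule.span ℝ ((· - y) '' f))
    (hF' : F' = Submodule.span ℝ ((· - y') '' f'))
    (hri : (intrinsicInterior ℝ f ∩ intrinsicInterior ℝ e).Nonempty)
    (hdimF : Module.finrank ℝ F' = Module.finrank ℝ F + 1)
    (hdimEF : Module.finrank ℝ ↥(E ⊓ F') = Module.finrank ℝ ↥(E ⊓ F) + 1) :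
    (intrinsicInterior ℝ e ∩ intrinsicInterior ℝ f').Nonempty := by
  -- identify the spans with vector spans
  have hvsub : ∀ (s : Set (EuclideanSpace ℝ (Fin d))) (p : EuclideanSpace ℝ (Fin d)), p ∈ s →
      Submodule.span ℝ ((· - p) '' s) = vectorSpan ℝ s := by
    intro s p hp
    rw [vectorSpan_eq_span_vsub_set_right ℝ hp]
    rfl
  rw [hvsub e x hx] at hE
  rw [hvsub f y hy] at hF
  rw [hvsub f' y' hy'] at hF'
  have hFF' : F ≤ F' := by rw [hF, hF']; exact vectorSpan_mono ℝ hff'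
  -- pick v ∈ E ⊓ F', v ∉ F
  have hnle : ¬ (E ⊓ F' ≤ F) := by
    intro h
    have : E ⊓ F' = E ⊓ F :=
      le_antisymm (le_inf inf_le_left h) (inf_le_inf_left _ hFF')
    rw [this] at hdimEF
    omega
  obtain ⟨v, hvEF', hvF⟩ := SetLike.not_le_iff_exists.1 hnle
  clear hnle
  have hvE : v ∈ E := hvEF'.1
  have hvF' : v ∈ F' := hvEF'.2
  have hv0 : v ≠ 0 := fun h => hvF (h ▸ F.zero_mem)
  -- F ⊔ span {v} = F'
  have hsup : F ⊔ Submodule.span ℝ {v} = F' := by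
    apply Submodule.eq_of_le_of_finrank_le
    · exact sup_le hFF' ((Submodule.span_singleton_le_iff_mem v F').2 hvF')
    · rw [hdimF]
      have hlt : F < F ⊔ Submodule.span ℝ {v} := by
        refine lt_of_le_of_ne le_sup_left (fun h => hvF ?_)
        rw [h]
        exact Submodule.mem_sup_right (Submodule.mem_span_singleton_self v)
      have := Submodule.finrank_lt_finrank_of_lt hlt
      omega
  -- a point in relint f ∩ relint e and a point in relint f'
  obtain ⟨z, hzf, hze⟩ := hri
  obtain ⟨w₀, hw₀⟩ := Set.Nonempty.intrinsicInterior hf' ⟨y', hy'⟩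
  have hzf' : z ∈ f' := hff' (intrinsicInterior_subset hzf)
  have hw₀f' : w₀ ∈ f' := intrinsicInterior_subset hw₀
  -- decompose w₀ - z
  have hwz : w₀ - z ∈ F' := by
    rw [hF']
    exact vsub_mem_vectorSpan ℝ hw₀f' hzf'
  rw [← hsup, Submodule.mem_sup] at hwz
  obtain ⟨u, hu, b, hb, hub⟩ := hwz
  obtain ⟨c, rfl⟩ := Submodule.mem_span_singleton.1 hb
  -- perturb w₀ so that the v-coefficient is nonzero
  obtain ⟨hw₀span, ε₁, hε₁, hball₁⟩ := relint_ball hw₀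
  have hnv : 0 < ‖v‖ := norm_pos_iff.2 hv0
  set e1 : ℝ := ε₁ / (2 * ‖v‖) with he1
  set e2 : ℝ := ε₁ / (4 * ‖v‖) with he2
  have he1pos : 0 < e1 := by positivity
  have he2pos : 0 < e2 := by positivity
  set ε : ℝ := if c + e1 = 0 then e2 else e1 with hεdef
  have hεpos : 0 < ε := by rw [hεdef]; split <;> assumption
  have hεsmall : ε * ‖v‖ < ε₁ := by
    have h1 : e1 * ‖v‖ < ε₁ := by
      have : e1 * ‖v‖ = ε₁ / 2 := by rw [he1]; field_simp
      rw [this]; linarith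
    have h2 : e2 * ‖v‖ < ε₁ := by
      have : e2 * ‖v‖ = ε₁ / 4 := by rw [he2]; field_simp
      rw [this]; linarith
    rw [hεdef]; split <;> assumption
  have hs0 : c + ε ≠ 0 := by
    have he12 : e2 < e1 := by
      rw [he1, he2]
      apply div_lt_div_of_pos_left hε₁ (by positivity) (by nlinarith)
    rw [hεdef]; split_ifs with h
    · intro h2; linarith
    · exact h
  set w := w₀ + ε • v with hwdef
  have hvdirF' : v ∈ (affineSpan ℝ f').direction := by
    rw [direction_affineSpan, ← hF']; exact hvF'
  have hwspan : w ∈ affineSpan ℝ f' := by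
    have : w = (ε • v) +ᵥ w₀ := by rw [hwdef, vadd_eq_add]; abel
    rw [this]
    exact AffineSubspace.vadd_mem_of_mem_direction (Submodule.smul_mem _ _ hvdirF') hw₀span
  have hw : w ∈ intrinsicInterior ℝ f' := by
    apply hball₁ w hwspan
    rw [hwdef, dist_eq_norm, add_sub_cancel_left, norm_smul, Real.norm_eq_abs,
      abs_of_pos hεpos]
    exact hεsmall
  set s : ℝ := c + ε with hsdef
  have hweq : w = z + u + s • v := by
    rw [hwdef, hsdef]
    have : w₀ = z + (u + c • v) := by rw [hub]; abel
    rw [this]; module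
  have hwf' : w ∈ f' := intrinsicInterior_subset hw
  -- balls around z in relint f and relint e
  obtain ⟨hzspanf, εf, hεf, hballf⟩ := relint_ball hzf
  obtain ⟨hzspane, εe, hεe, hballe⟩ := relint_ball hze
  set δ : ℝ := min (εf / (‖u‖ + 1)) (εe / (|s| * ‖v‖ + 1)) / 2 with hδdef
  have hδpos : 0 < δ := by
    rw [hδdef]
    have h1 : 0 < εf / (‖u‖ + 1) := by positivity
    have h2 : 0 < εe / (|s| * ‖v‖ + 1) := by positivity
    positivity
  have hδf : δ * ‖u‖ < εf := by
    have h1 : δ ≤ εf / (‖u‖ + 1) / 2 := by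
      rw [hδdef]; exact div_le_div_of_nonneg_right (min_le_left _ _) (by norm_num)
    have hM : (0:ℝ) ≤ ‖u‖ := norm_nonneg u
    have h3 : δ * (‖u‖ + 1) ≤ εf / (‖u‖ + 1) / 2 * (‖u‖ + 1) :=
      mul_le_mul_of_nonneg_right h1 (by linarith)
    have h4 : εf / (‖u‖ + 1) / 2 * (‖u‖ + 1) = εf / 2 := by field_simp
    have h5 : δ * (‖u‖ + 1) = δ * ‖u‖ + δ := by ring
    linarith
  have hδe : δ * (|s| * ‖v‖) < εe := by
    have h1 : δ ≤ εe / (|s| * ‖v‖ + 1) / 2 := by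
      rw [hδdef]; exact div_le_div_of_nonneg_right (min_le_right _ _) (by norm_num)
    have hM : (0:ℝ) ≤ |s| * ‖v‖ := mul_nonneg (abs_nonneg s) (norm_nonneg v)
    have h3 : δ * (|s| * ‖v‖ + 1) ≤ εe / (|s| * ‖v‖ + 1) / 2 * (|s| * ‖v‖ + 1) :=
      mul_le_mul_of_nonneg_right h1 (by linarith)
    have h4 : εe / (|s| * ‖v‖ + 1) / 2 * (|s| * ‖v‖ + 1) = εe / 2 := by field_simp
    have h5 : δ * (|s| * ‖v‖ + 1) = δ * (|s| * ‖v‖) + δ := by ring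
    linarith
  -- the point a = z - δ u lies in f
  set a := z - δ • u with hadef
  have hudirF : u ∈ (affineSpan ℝ f).direction := by
    rw [direction_affineSpan, ← hF]; exact hu
  have haspan : a ∈ affineSpan ℝ f := by
    have : a = ((-δ) • u) +ᵥ z := by rw [hadef, vadd_eq_add]; module
    rw [this]
    exact AffineSubspace.vadd_mem_of_mem_direction (Submodule.smul_mem _ _ hudirF) hzspanf
  have haf : a ∈ f := by
    refine intrinsicInterior_subset (𝕜 := ℝ) (hballf a haspan ?_)
    rw [hadef, dist_eq_norm]
    have : z - δ • u - z = (-δ) • u := by module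
    rw [this, norm_smul, Real.norm_eq_abs, abs_neg, abs_of_pos hδpos]
    exact hδf
  -- the combination point
  set t : ℝ := δ / (1 + δ) with htdef
  have ht0 : 0 < t := by rw [htdef]; positivity
  have ht1 : t < 1 := by
    rw [htdef, div_lt_one (by linarith)]; linarith
  have htδ : t < δ := by
    rw [htdef, div_lt_iff₀ (by linarith : (0:ℝ) < 1 + δ)]
    nlinarith [mul_pos hδpos hδpos]
  set p := (1 - t) • a + t • w with hpdef
  have hpf' : p ∈ intrinsicInterior ℝ f' := combo_mem_relint hf' (hff' haf) hw ht0 ht1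
  -- p = z + (t * s) • v
  have h1δ : (1:ℝ) + δ ≠ 0 := by positivity
  have hcoef : t - (1 - t) * δ = 0 := by
    rw [htdef]; field_simp; ring
  have hpeq : p = z + (t * s) • v := by
    have step : p = z + (t - (1 - t) * δ) • u + (t * s) • v := by
      rw [hpdef, hadef, hweq]; module
    rw [step, hcoef, zero_smul, add_zero]
  have hvdirE : v ∈ (affineSpan ℝ e).direction := by
    rw [direction_affineSpan, ← hE]; exact hvE
  have hpe : p ∈ intrinsicInterior ℝ e := by
    apply hballe p
    · rw [hpeq]
      have : z + (t * s) • v = ((t * s) • v) +ᵥ z := by rw [vadd_eq_add]; abel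
      rw [this]
      exact AffineSubspace.vadd_mem_of_mem_direction (Submodule.smul_mem _ _ hvdirE) hzspane
    · rw [hpeq, dist_eq_norm, add_sub_cancel_left, norm_smul, Real.norm_eq_abs, abs_mul,
        abs_of_pos ht0]
      calc t * |s| * ‖v‖ < δ * |s| * ‖v‖ := by
            apply mul_lt_mul_of_pos_right _ hnv
            apply mul_lt_mul_of_pos_right htδ
            exact abs_pos.2 hs0
        _ = δ * (|s| * ‖v‖) := by ring
        _ < εe := hδe
  exact ⟨p, hpe, hpf'⟩
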